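/- Let V be a finite-dimensional inner product space and {x_k}, {y_k} sequences in V with Δt > 0. Suppose for all k: ‖y_{k+1}‖² − ‖y_k‖² + (Δt/2)·A_{k} ≤ Δt·c₁(‖y_k‖² + ‖y_{k+1}‖²) + Δt·g_k, where A_k ≥ 0, c₁ ≥ 0, g_k ≥ 0. Then for all k with 2c₁Δt < 1: ‖y_k‖² + (Δt/2)∑_{m=0}^{k−1} A_m ≤ e^{2c₁(k+1)Δt/(1−2c₁Δt)}·(‖y_0‖² + Δt∑_{m=0}^{k−1} g_m) (up to a modified constant in the exponent). -/

import Mathlib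

open Finset

set_option maxHeartbeats 800000 in
/-- Combination of the per-step energy estimate and the discrete Grönwall inequality
yielding the final a priori error bound of Theorem 4.2. -/
theorem per_step_plus_gronwall
    {V : Type*} [NormedAddCommGroup V] [InnerProductSpace ℝ V] [FiniteDimensional ℝ V]
    (y : ℕ → V) (A g : ℕ → ℝ) (hA : ∀ k, 0 ≤ A k) (hg : ∀ k, 0 ≤ g k)
    (c₁ Δt : ℝ) (hc₁ : 0 ≤ c₁) (hΔt : 0 < Δt)
    (hyp : ∀ k : ℕ, ‖y (k + 1)‖ ^ 2 - ‖y k‖ ^ 2 + (Δt / 2) * A k ≤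
      Δt * c₁ * (‖y k‖ ^ 2 + ‖y (k + 1)‖ ^ 2) + Δt * g k)
    (hsmall : 2 * c₁ * Δt < 1) :
    ∀ k : ℕ, ‖y k‖ ^ 2 + (Δt / 2) * ∑ m ∈ range k, A m ≤
      Real.exp (2 * c₁ * (k + 1) * Δt / (1 - 2 * c₁ * Δt)) *
        (‖y 0‖ ^ 2 + Δt * ∑ m ∈ range k, g m) := by
  obtain ⟨a, ha⟩ : ∃ x : ℝ, x = c₁ * Δt := ⟨_, rfl⟩
  have ha0 : 0 ≤ a := by rw [ha]; exact mul_nonneg hc₁ hΔt.le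
  have h2a : 2 * a < 1 := by rw [ha]; nlinarith [hsmall]
  have h1a : 0 < 1 - a := by linarith
  have h12a : 0 < 1 - 2 * a := by linarith
  obtain ⟨r, hr⟩ : ∃ x : ℝ, x = (1 + a) / (1 - a) := ⟨_, rfl⟩
  have hr1 : 1 ≤ r := by rw [hr, le_div_iff₀ h1a]; linarith
  have hr0 : 0 ≤ r := by linarith
  obtain ⟨t, ht⟩ : ∃ x : ℝ, x = 2 * a / (1 - 2 * a) := ⟨_, rfl⟩
  have ht0 : 0 ≤ t := by rw [ht]; exact div_nonneg (by linarith) h12a.le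
  have hdiv : 2 * a / (1 - a) ≤ t := by
    rw [ht, div_le_div_iff₀ h1a h12a]; nlinarith
  have hrexp : r ≤ Real.exp t := by
    have h1 : r = 2 * a / (1 - a) + 1 := by rw [hr, div_add_one h1a.ne']; ring
    calc r = 2 * a / (1 - a) + 1 := h1
      _ ≤ Real.exp (2 * a / (1 - a)) := Real.add_one_le_exp _
      _ ≤ Real.exp t := Real.exp_le_exp.2 hdiv
  have hinv : 1 / (1 - a) ≤ Real.exp t := by
    have h1 : 1 / (1 - a) = a / (1 - a) + 1 := by field_simp; ring
    have h2 : a / (1 - a) ≤ 2 * a / (1 - a) := by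
      rw [div_le_div_iff₀ h1a h1a]; nlinarith
    calc 1 / (1 - a) = a / (1 - a) + 1 := h1
      _ ≤ Real.exp (a / (1 - a)) := Real.add_one_le_exp _
      _ ≤ Real.exp t := Real.exp_le_exp.2 (le_trans h2 hdiv)
  have key : ∀ k : ℕ, ‖y k‖ ^ 2 + (Δt / 2) * ∑ m ∈ range k, A m ≤
      r ^ k / (1 - a) * (‖y 0‖ ^ 2 + Δt * ∑ m ∈ range k, g m) := by
    intro k
    induction k with
    | zero =>
        simp only [range_zero, sum_empty, mul_zero, add_zero, pow_zero]
        rw [div_mul_eq_mul_div, one_mul, le_div_iff₀ h1a]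
        nlinarith [sq_nonneg ‖y 0‖]
    | succ k ih =>
        have hstep := hyp k
        have hgsum : 0 ≤ ∑ m ∈ range k, g m := sum_nonneg fun m _ => hg m
        have hAsum : 0 ≤ ∑ m ∈ range k, A m := sum_nonneg fun m _ => hA m
        have hD : 0 ≤ ‖y 0‖ ^ 2 + Δt * ∑ m ∈ range k, g m := by positivity
        have hrk : (1:ℝ) ≤ r ^ k := by simpa using pow_le_pow_left₀ zero_le_one hr1 k
        have hAk := hA k
        have hgk := hg k
        have hstep' : ‖y (k+1)‖ ^ 2 + (Δt / 2) * A k ≤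
            r * ‖y k‖ ^ 2 + Δt * g k / (1 - a) := by
          have e1 : r * ‖y k‖ ^ 2 + Δt * g k / (1 - a)
              = ((1 + a) * ‖y k‖ ^ 2 + Δt * g k) / (1 - a) := by
            rw [hr]; field_simp
          rw [e1, le_div_iff₀ h1a]
          nlinarith [mul_nonneg ha0 (mul_nonneg (by linarith : (0:ℝ) ≤ Δt / 2) hAk)]
        have hXnn : 0 ≤ (Δt / 2) * ∑ m ∈ range k, A m :=
          mul_nonneg (by linarith) hAsum
        have hmono : (Δt / 2) * ∑ m ∈ range k, A m ≤
            r * ((Δt / 2) * ∑ m ∈ range k, A m) := by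
          calc (Δt / 2) * ∑ m ∈ range k, A m
              = 1 * ((Δt / 2) * ∑ m ∈ range k, A m) := (one_mul _).symm
            _ ≤ r * ((Δt / 2) * ∑ m ∈ range k, A m) :=
                mul_le_mul_of_nonneg_right hr1 hXnn
        have hS : ‖y (k+1)‖ ^ 2 + (Δt / 2) * ∑ m ∈ range (k+1), A m ≤
            r * (‖y k‖ ^ 2 + (Δt / 2) * ∑ m ∈ range k, A m) + Δt * g k / (1 - a) := by
          rw [sum_range_succ, mul_add]
          have hexpand : r * (‖y k‖ ^ 2 + (Δt / 2) * ∑ m ∈ range k, A m)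
              = r * ‖y k‖ ^ 2 + r * ((Δt / 2) * ∑ m ∈ range k, A m) := mul_add _ _ _
          rw [hexpand]
          linarith
        have hih : r * (‖y k‖ ^ 2 + (Δt / 2) * ∑ m ∈ range k, A m) ≤
            r * (r ^ k / (1 - a) * (‖y 0‖ ^ 2 + Δt * ∑ m ∈ range k, g m)) :=
          mul_le_mul_of_nonneg_left ih hr0
        have h3 : (1:ℝ) ≤ r ^ k * r := by nlinarith
        have h4 : 0 ≤ Δt * g k / (1 - a) := div_nonneg (mul_nonneg hΔt.le hgk) h1a.le
        have h5 : Δt * g k / (1 - a) ≤ r ^ k * r / (1 - a) * (Δt * g k) := by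
          calc Δt * g k / (1 - a) = 1 * (Δt * g k / (1 - a)) := (one_mul _).symm
            _ ≤ (r ^ k * r) * (Δt * g k / (1 - a)) := mul_le_mul_of_nonneg_right h3 h4
            _ = r ^ k * r / (1 - a) * (Δt * g k) := by ring
        have e : r ^ (k+1) / (1 - a) * (‖y 0‖ ^ 2 + Δt * ∑ m ∈ range (k+1), g m)
            = r * (r ^ k / (1 - a) * (‖y 0‖ ^ 2 + Δt * ∑ m ∈ range k, g m))
              + r ^ k * r / (1 - a) * (Δt * g k) := by
          rw [sum_range_succ, pow_succ]; ring
        rw [e]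
        linarith
  intro k
  have hgsum : 0 ≤ ∑ m ∈ range k, g m := sum_nonneg fun m _ => hg m
  have hD : 0 ≤ ‖y 0‖ ^ 2 + Δt * ∑ m ∈ range k, g m := by positivity
  have hexp_eq : 2 * c₁ * (k + 1 : ℝ) * Δt / (1 - 2 * c₁ * Δt) = (k + 1 : ℝ) * t := by
    rw [ht, ha]; field_simp
  have hrkt : r ^ k / (1 - a) ≤ Real.exp ((k + 1 : ℝ) * t) := by
    have h1 : r ^ k ≤ Real.exp ((k : ℝ) * t) := by
      rw [Real.exp_nat_mul]
      exact pow_le_pow_left₀ hr0 hrexp k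
    have h2 : Real.exp ((k + 1 : ℝ) * t) = Real.exp ((k : ℝ) * t) * Real.exp t := by
      rw [← Real.exp_add, add_mul, one_mul]
    rw [h2]
    calc r ^ k / (1 - a) = r ^ k * (1 / (1 - a)) := by ring
      _ ≤ Real.exp ((k : ℝ) * t) * Real.exp t :=
          mul_le_mul h1 hinv (by positivity) (Real.exp_nonneg _)
  calc ‖y k‖ ^ 2 + (Δt / 2) * ∑ m ∈ range k, A m
      ≤ r ^ k / (1 - a) * (‖y 0‖ ^ 2 + Δt * ∑ m ∈ range k, g m) := key k
    _ ≤ Real.exp ((k + 1 : ℝ) * t) * (‖y 0‖ ^ 2 + Δt * ∑ m ∈ range k, g m) :=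
        mul_le_mul_of_nonneg_right hrkt hD
    _ = Real.exp (2 * c₁ * (k + 1) * Δt / (1 - 2 * c₁ * Δt)) *
        (‖y 0‖ ^ 2 + Δt * ∑ m ∈ range k, g m) := by rw [hexp_eq]
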